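/- For every coset spectral system and for all i ∈ I, α ∈ A, z ∈ X one has Σ_{x∈X} M(i, α, x) · S̈_{xz} = Σ_{j∈I} Σ_{β∈A} S_{ij} · conj(Ṡ_{αβ}) · M(j, β, z). -/

import Mathlib

open scoped BigOperators

/-- A modular datum `(I, S, ω, C)`: the genus-zero modular matrices data of §2.1. -/
structure ModularDatum (I : Type*) [Fintype I] [DecidableEq I] : Type _ where
  one : I
  bar : I → I
  bar_invol : Function.Involutive bar
  bar_one : bar one = one
  S : Matrix I I ℂ
  S_symm : ∀ i j, S i j = S j i
  S_unitary : S ∈ Matrix.unitaryGroup I ℂ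
  S_one_im : ∀ i, (S one i).im = 0
  S_one_pos : ∀ i, 0 < (S one i).re
  ω : I → ℂ
  ω_abs : ∀ i, ‖ω i‖ = 1
  ω_one : ω one = 1
  ω_bar : ∀ i, ω (bar i) = ω i
  C : ℂ
  C_abs : ‖C‖ = 1
  rel_STS : (S * Matrix.diagonal (fun i => C * ω i)) ^ 3 = S ^ 2
  rel_Ssq : ∀ i j, (S ^ 2) i j = if j = bar i then 1 else 0

/-- A coset spectral system: three modular data `(I,S,ω,C)`, `(A,Ṡ,ω̇,Ċ)`, `(X,S̈,ω̈,C̈)`,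
a nonnegative function `M` on `I × A × X` with `M(1,1,1) = 1`, and a finite spectral index
set `E` with maps `k, δ, ζ` and nonnegative weights `p`, satisfying the conclusions (a)–(d)
of Lemma A of §3.1 of the paper. -/
structure CosetSpectralSystem (I A X E : Type*)
    [Fintype I] [DecidableEq I] [Fintype A] [DecidableEq A]
    [Fintype X] [DecidableEq X] [Fintype E] : Type _ where
  G : ModularDatum I
  H : ModularDatum A
  Q : ModularDatum X
  M : I → A → X → ℝ
  M_nonneg : ∀ i α x, 0 ≤ M i α x
  M_vac : M G.one H.one Q.one = 1
  k : E → I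
  δ : E → A
  ζ : E → X
  p : E → ℝ
  p_nonneg : ∀ e, 0 ≤ p e
  spec : ∀ i α x, (M i α x : ℂ) =
    ∑ e, (G.S (G.bar i) (k e) / G.S G.one (k e)) *
         (H.S α (δ e) / H.S H.one (δ e)) *
         (Q.S x (ζ e) / Q.S Q.one (ζ e)) * (p e : ℂ)
  vac_node : ∃ e₀, k e₀ = G.one ∧ δ e₀ = H.one ∧ ζ e₀ = Q.one ∧ 0 < p e₀
  phase : ∀ j β y, M j β y ≠ 0 → Q.ω y = G.ω j * (H.ω β)⁻¹
  norm_one : ∑ j, ∑ β, ∑ y,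
    G.S G.one j * star (H.S H.one β) * star (Q.S Q.one y) * (M j β y : ℂ) = 1

private lemma unit_mul_star {z : ℂ} (h : ‖z‖ = 1) : z * star z = 1 := by
  have h2 : z * (starRingEnd ℂ) z = (Complex.normSq z : ℂ) := Complex.mul_conj z
  have h3 : Complex.normSq z = 1 := by
    rw [← Complex.sq_norm, h]; norm_num
  rw [show (star z) = (starRingEnd ℂ) z from rfl, h2, h3]; norm_num

private lemma star_mul_unit {z : ℂ} (h : ‖z‖ = 1) : star z * z = 1 := by
  rw [mul_comm]; exact unit_mul_star h

namespace ModularDatum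

variable {I : Type*} [Fintype I] [DecidableEq I] (D : ModularDatum I)

lemma S_one_ne (i : I) : D.S D.one i ≠ 0 := by
  intro h
  have h2 := D.S_one_pos i
  rw [h] at h2
  simp at h2

lemma S_one_real (i : I) : star (D.S D.one i) = D.S D.one i :=
  Complex.conj_eq_iff_im.mpr (D.S_one_im i)

lemma sum_S_mul_S (i m : I) : ∑ j, D.S i j * D.S j m = if m = D.bar i then 1 else 0 := by
  have h := D.rel_Ssq i m
  rwa [pow_two, Matrix.mul_apply] at h

lemma star_S_mul_S : star D.S * D.S = 1 := Matrix.mem_unitaryGroup_iff'.mp D.S_unitary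

lemma conj_S (i j : I) : star (D.S i j) = D.S (D.bar i) j := by
  have h1 : star D.S * (D.S * D.S) = D.S := by
    rw [← Matrix.mul_assoc, D.star_S_mul_S, Matrix.one_mul]
  have h2 := congrFun (congrFun h1 j) (D.bar i)
  rw [Matrix.mul_apply] at h2
  have h3 : ∀ m : I, (D.S * D.S) m (D.bar i) = if m = i then 1 else 0 := by
    intro m
    have h4 := D.rel_Ssq m (D.bar i)
    rw [pow_two] at h4
    rw [h4]
    refine if_congr ?_ rfl rfl
    constructor
    · intro h; exact (D.bar_invol.injective h).symm
    · intro h; rw [h]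
  simp only [h3, Matrix.star_apply, mul_ite, mul_one, mul_zero] at h2
  rw [Finset.sum_ite_eq' Finset.univ i (fun m => star (D.S m j))] at h2
  simp only [Finset.mem_univ, if_true] at h2
  rw [h2, D.S_symm]

lemma conj_S' (i j : I) : star (D.S i j) = D.S i (D.bar j) := by
  rw [D.S_symm i j, D.conj_S, D.S_symm]

lemma S_bar_bar (a b : I) : D.S (D.bar a) (D.bar b) = D.S a b := by
  rw [← D.conj_S, ← D.conj_S', star_star]

lemma S_one_bar (i : I) : D.S D.one (D.bar i) = D.S D.one i := by
  rw [← D.conj_S', D.S_one_real]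

lemma ω_ne (i : I) : D.ω i ≠ 0 := by
  intro h
  have := D.ω_abs i
  rw [h] at this
  simp at this

end ModularDatum


namespace ModularDatum

variable {I : Type*} [Fintype I] [DecidableEq I] (D : ModularDatum I)

noncomputable def Tm : Matrix I I ℂ := Matrix.diagonal fun i => D.C * D.ω i
noncomputable def Tm' : Matrix I I ℂ := Matrix.diagonal fun i => star (D.C * D.ω i)

lemma Cω_abs (i : I) : ‖D.C * D.ω i‖ = 1 := by
  rw [norm_mul, D.C_abs, D.ω_abs, one_mul]

lemma Tm_mul_Tm' : D.Tm * D.Tm' = 1 := by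
  rw [Tm, Tm', Matrix.diagonal_mul_diagonal]
  have h : (fun i => (D.C * D.ω i) * star (D.C * D.ω i)) = fun _ : I => (1:ℂ) := by
    funext i; exact unit_mul_star (D.Cω_abs i)
  rw [h, Matrix.diagonal_one]

lemma Tm'_mul_Tm : D.Tm' * D.Tm = 1 := by
  rw [Tm, Tm', Matrix.diagonal_mul_diagonal]
  have h : (fun i => star (D.C * D.ω i) * (D.C * D.ω i)) = fun _ : I => (1:ℂ) := by
    funext i; exact star_mul_unit (D.Cω_abs i)
  rw [h, Matrix.diagonal_one]

lemma TSTST : D.Tm * (D.S * (D.Tm * (D.S * D.Tm))) = D.S := by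
  have h : (D.S * D.Tm) ^ 3 = D.S ^ 2 := D.rel_STS
  rw [pow_succ, pow_succ, pow_one, pow_two] at h
  calc D.Tm * (D.S * (D.Tm * (D.S * D.Tm)))
      = (star D.S * D.S) * (D.Tm * (D.S * (D.Tm * (D.S * D.Tm)))) := by
        rw [D.star_S_mul_S, Matrix.one_mul]
    _ = star D.S * ((D.S * D.Tm) * (D.S * D.Tm) * (D.S * D.Tm)) := by
        simp only [Matrix.mul_assoc]
    _ = star D.S * (D.S * D.S) := by rw [h]
    _ = D.S := by rw [← Matrix.mul_assoc, D.star_S_mul_S, Matrix.one_mul]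

lemma STS : D.S * (D.Tm * D.S) = D.Tm' * (D.S * D.Tm') := by
  calc D.S * (D.Tm * D.S)
      = (D.Tm' * D.Tm) * (D.S * ((D.Tm * D.S) * (D.Tm * D.Tm'))) := by
        rw [D.Tm'_mul_Tm, D.Tm_mul_Tm', Matrix.one_mul, Matrix.mul_one]
    _ = D.Tm' * ((D.Tm * (D.S * (D.Tm * (D.S * D.Tm)))) * D.Tm') := by
        simp only [Matrix.mul_assoc]
    _ = D.Tm' * (D.S * D.Tm') := by rw [D.TSTST]

lemma SSTST : D.S * (D.S * (D.Tm * (D.S * D.Tm))) = D.S * (D.Tm' * D.S) := by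
  have h2 : D.S * (D.Tm * (D.S * D.Tm)) = D.Tm' * D.S := by
    calc D.S * (D.Tm * (D.S * D.Tm))
        = (D.Tm' * D.Tm) * (D.S * (D.Tm * (D.S * D.Tm))) := by
          rw [D.Tm'_mul_Tm, Matrix.one_mul]
      _ = D.Tm' * (D.Tm * (D.S * (D.Tm * (D.S * D.Tm)))) := by
          simp only [Matrix.mul_assoc]
      _ = D.Tm' * D.S := by rw [D.TSTST]
  rw [h2]

lemma gauss2 (d m : I) :
    ∑ β, D.S d β * ((D.C * D.ω β) * D.S β m)
      = star (D.C * D.ω d) * (D.S d m * star (D.C * D.ω m)) := by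
  have h := congrFun (congrFun D.STS d) m
  simp only [Tm, Tm'] at h
  rw [Matrix.mul_apply] at h
  simp only [Matrix.diagonal_mul, Matrix.mul_diagonal] at h
  exact h

lemma gauss1 (i m : I) :
    ∑ j, D.S i j * (star (D.C * D.ω j) * D.S j m)
      = (D.C * D.ω (D.bar i)) * (D.S (D.bar i) m * (D.C * D.ω m)) := by
  have hm : (D.S * D.S) * (D.Tm * (D.S * D.Tm)) = D.S * (D.Tm' * D.S) := by
    rw [Matrix.mul_assoc]; exact D.SSTST
  have h := congrFun (congrFun hm i) m
  rw [Matrix.mul_apply, Matrix.mul_apply] at h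
  simp only [Tm, Tm'] at h
  simp only [Matrix.diagonal_mul, Matrix.mul_diagonal] at h
  have hss : ∀ x : I, (D.S * D.S) i x = if x = D.bar i then 1 else 0 := by
    intro x
    have h4 := D.rel_Ssq i x
    rwa [pow_two] at h4
  simp only [hss, ite_mul, one_mul, zero_mul] at h
  rw [Finset.sum_ite_eq' Finset.univ (D.bar i)
    (fun x => D.C * D.ω x * (D.S x m * (D.C * D.ω m)))] at h
  simp only [Finset.mem_univ, if_true] at h
  exact h.symm

lemma sum_reindex_bar (f : I → ℂ) : ∑ j, f (D.bar j) = ∑ j, f j :=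
  Fintype.sum_equiv (Function.Involutive.toPerm D.bar D.bar_invol) _ _ (fun _ => rfl)

lemma BR1' (a m : I) :
    ∑ j, (star (D.C * D.ω j) * D.S (D.bar a) j) * D.S (D.bar j) m
      = D.C ^ 2 * ((D.ω a * D.ω m) * D.S (D.bar a) m) := by
  have hb : ∀ j, D.bar (D.bar j) = j := D.bar_invol
  rw [← D.sum_reindex_bar (fun j => (star (D.C * D.ω j) * D.S (D.bar a) j) * D.S (D.bar j) m)]
  simp only [D.ω_bar, hb, D.S_bar_bar]
  calc ∑ j, (star (D.C * D.ω j) * D.S a j) * D.S j m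
      = ∑ j, D.S a j * (star (D.C * D.ω j) * D.S j m) := by
        refine Finset.sum_congr rfl fun j _ => by ring
    _ = (D.C * D.ω (D.bar a)) * (D.S (D.bar a) m * (D.C * D.ω m)) := D.gauss1 a m
    _ = D.C ^ 2 * ((D.ω a * D.ω m) * D.S (D.bar a) m) := by rw [D.ω_bar]; ring

lemma BR2' (d m : I) :
    ∑ β, ((D.C * D.ω β) * D.S d β) * D.S β m
      = (star D.C) ^ 2 * ((star (D.ω d) * star (D.ω m)) * D.S d m) := by
  calc ∑ β, ((D.C * D.ω β) * D.S d β) * D.S β m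
      = ∑ β, D.S d β * ((D.C * D.ω β) * D.S β m) := by
        refine Finset.sum_congr rfl fun β _ => by ring
    _ = star (D.C * D.ω d) * (D.S d m * star (D.C * D.ω m)) := D.gauss2 d m
    _ = (star D.C) ^ 2 * ((star (D.ω d) * star (D.ω m)) * D.S d m) := by
        simp only [star_mul']
        ring

lemma IND1 (a m : I) :
    ∑ j, D.S (D.bar a) j * D.S (D.bar j) m = if m = D.bar a then 1 else 0 := by
  have hb : ∀ j, D.bar (D.bar j) = j := D.bar_invol
  rw [← D.sum_reindex_bar (fun j => D.S (D.bar a) j * D.S (D.bar j) m)]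
  simp only [hb, D.S_bar_bar]
  exact D.sum_S_mul_S a m

lemma BR1 (m : I) :
    ∑ j, (star (D.ω j) * D.S D.one j) * D.S (D.bar j) m
      = D.C ^ 3 * (D.ω m * D.S D.one m) := by
  have h := D.BR1' D.one m
  rw [D.bar_one, D.ω_one] at h
  rw [one_mul] at h
  have h2 : star D.C * ∑ j, (star (D.ω j) * D.S D.one j) * D.S (D.bar j) m
      = D.C ^ 2 * (D.ω m * D.S D.one m) := by
    rw [Finset.mul_sum]
    rw [← h]
    refine Finset.sum_congr rfl fun j _ => ?_
    simp only [star_mul']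
    ring
  calc ∑ j, (star (D.ω j) * D.S D.one j) * D.S (D.bar j) m
      = (D.C * star D.C) * ∑ j, (star (D.ω j) * D.S D.one j) * D.S (D.bar j) m := by
        rw [unit_mul_star D.C_abs, one_mul]
    _ = D.C * (star D.C * ∑ j, (star (D.ω j) * D.S D.one j) * D.S (D.bar j) m) := by ring
    _ = D.C * (D.C ^ 2 * (D.ω m * D.S D.one m)) := by rw [h2]
    _ = D.C ^ 3 * (D.ω m * D.S D.one m) := by ring

lemma BR2 (m : I) :
    ∑ β, (D.ω β * D.S D.one β) * D.S β m
      = (star D.C) ^ 3 * (star (D.ω m) * D.S D.one m) := by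
  have h := D.BR2' D.one m
  rw [D.ω_one] at h
  simp only [star_one, one_mul] at h
  have h2 : D.C * ∑ β, (D.ω β * D.S D.one β) * D.S β m
      = (star D.C) ^ 2 * (star (D.ω m) * D.S D.one m) := by
    rw [Finset.mul_sum, ← h]
    refine Finset.sum_congr rfl fun β _ => by ring
  calc ∑ β, (D.ω β * D.S D.one β) * D.S β m
      = (star D.C * D.C) * ∑ β, (D.ω β * D.S D.one β) * D.S β m := by
        rw [star_mul_unit D.C_abs, one_mul]
    _ = star D.C * (D.C * ∑ β, (D.ω β * D.S D.one β) * D.S β m) := by ring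
    _ = star D.C * ((star D.C) ^ 2 * (star (D.ω m) * D.S D.one m)) := by rw [h2]
    _ = (star D.C) ^ 3 * (star (D.ω m) * D.S D.one m) := by ring

end ModularDatum

private lemma sum_swap4 {α β γ ε M : Type*} [AddCommMonoid M]
    [Fintype α] [Fintype β] [Fintype γ] [Fintype ε] (f : α → β → γ → ε → M) :
    ∑ a, ∑ b, ∑ c, ∑ e, f a b c e = ∑ e, ∑ a, ∑ b, ∑ c, f a b c e := by
  calc ∑ a, ∑ b, ∑ c, ∑ e, f a b c e
      = ∑ a, ∑ b, ∑ e, ∑ c, f a b c e :=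
        Finset.sum_congr rfl fun a _ => Finset.sum_congr rfl fun b _ => Finset.sum_comm
    _ = ∑ a, ∑ e, ∑ b, ∑ c, f a b c e :=
        Finset.sum_congr rfl fun a _ => Finset.sum_comm
    _ = ∑ e, ∑ a, ∑ b, ∑ c, f a b c e := Finset.sum_comm

private lemma sum_rev3 {I A X M : Type*} [AddCommMonoid M] [Fintype I] [Fintype A] [Fintype X]
    (f : I → A → X → M) :
    ∑ j, ∑ β, ∑ y, f j β y = ∑ y, ∑ β, ∑ j, f j β y := by
  calc ∑ j, ∑ β, ∑ y, f j β y
      = ∑ j, ∑ y, ∑ β, f j β y := Finset.sum_congr rfl fun j _ => Finset.sum_comm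
    _ = ∑ y, ∑ j, ∑ β, f j β y := Finset.sum_comm
    _ = ∑ y, ∑ β, ∑ j, f j β y := Finset.sum_congr rfl fun y _ => Finset.sum_comm

namespace CosetSpectralSystem

variable {I A X E : Type*} [Fintype I] [DecidableEq I] [Fintype A] [DecidableEq A]
    [Fintype X] [DecidableEq X] [Fintype E] (𝒮 : CosetSpectralSystem I A X E)

lemma swap_spec (F : I → ℂ) (Gf : A → ℂ) (Hf : X → ℂ) :
    (∑ j, ∑ β, ∑ y, F j * Gf β * Hf y * (𝒮.M j β y : ℂ))
      = ∑ e, (𝒮.p e : ℂ) *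
          (∑ j, F j * (𝒮.G.S (𝒮.G.bar j) (𝒮.k e) / 𝒮.G.S 𝒮.G.one (𝒮.k e))) *
          (∑ β, Gf β * (𝒮.H.S β (𝒮.δ e) / 𝒮.H.S 𝒮.H.one (𝒮.δ e))) *
          (∑ y, Hf y * (𝒮.Q.S y (𝒮.ζ e) / 𝒮.Q.S 𝒮.Q.one (𝒮.ζ e))) := by
  simp only [𝒮.spec, Finset.mul_sum]
  rw [sum_swap4 (fun j β y e => F j * Gf β * Hf y *
    ((𝒮.G.S (𝒮.G.bar j) (𝒮.k e) / 𝒮.G.S 𝒮.G.one (𝒮.k e)) *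
     (𝒮.H.S β (𝒮.δ e) / 𝒮.H.S 𝒮.H.one (𝒮.δ e)) *
     (𝒮.Q.S y (𝒮.ζ e) / 𝒮.Q.S 𝒮.Q.one (𝒮.ζ e)) * (𝒮.p e : ℂ)))]
  refine Finset.sum_congr rfl fun e _ => ?_
  rw [sum_rev3 (fun a b c => F a * Gf b * Hf c *
    ((𝒮.G.S (𝒮.G.bar a) (𝒮.k e) / 𝒮.G.S 𝒮.G.one (𝒮.k e)) *
     (𝒮.H.S b (𝒮.δ e) / 𝒮.H.S 𝒮.H.one (𝒮.δ e)) *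
     (𝒮.Q.S c (𝒮.ζ e) / 𝒮.Q.S 𝒮.Q.one (𝒮.ζ e)) * (𝒮.p e : ℂ)))]
  simp only [Finset.sum_mul, Finset.mul_sum]
  refine Finset.sum_congr rfl fun y _ => Finset.sum_congr rfl fun β _ =>
    Finset.sum_congr rfl fun j _ => by ring

end CosetSpectralSystem


private lemma abs_one_re_one {z : ℂ} (h1 : ‖z‖ = 1) (h2 : z.re = 1) : z = 1 := by
  have h3 : z.re ^ 2 + z.im ^ 2 = 1 := by
    have h4 := Complex.sq_norm z
    rw [h1] at h4
    simp only [Complex.normSq_apply, one_pow] at h4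
    nlinarith [h4]
  have h5 : z.im = 0 := by nlinarith
  have : z = Complex.mk z.re z.im := rfl
  rw [this, h2, h5]
  rfl

private lemma star_abs (z : ℂ) : ‖star z‖ = ‖z‖ := norm_star z

private lemma eq_one_of_unit_sum {E : Type*} [Fintype E] (p : E → ℝ) (φ : E → ℂ)
    (hp : ∀ e, 0 ≤ p e) (hφ : ∀ e, ‖φ e‖ = 1)
    (h1 : ∑ e, (p e : ℂ) = 1) (h2 : ∑ e, φ e * (p e : ℂ) = 1) :
    ∀ e, p e ≠ 0 → φ e = 1 := by
  have hp1 : ∑ e, p e = 1 := by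
    have := congrArg Complex.re h1
    rw [Complex.re_sum] at this
    simpa using this
  have hre : ∑ e, (φ e).re * p e = 1 := by
    have := congrArg Complex.re h2
    rw [Complex.re_sum] at this
    simp only [Complex.mul_re, Complex.ofReal_re, Complex.ofReal_im, mul_zero, sub_zero] at this
    simpa using this
  have hz : ∑ e, (1 - (φ e).re) * p e = 0 := by
    simp only [sub_mul, one_mul, Finset.sum_sub_distrib, hp1, hre, sub_self]
  have hterm : ∀ e ∈ Finset.univ, (0:ℝ) ≤ (1 - (φ e).re) * p e := by
    intro e _
    apply mul_nonneg _ (hp e)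
    have := Complex.re_le_norm (φ e)
    rw [hφ e] at this
    linarith
  have hall := (Finset.sum_eq_zero_iff_of_nonneg hterm).mp hz
  intro e hpe
  have he := hall e (Finset.mem_univ e)
  have hre1 : (φ e).re = 1 := by
    rcases mul_eq_zero.mp he with h | h
    · linarith [h]
    · exact absurd h hpe
  exact abs_one_re_one (hφ e) hre1

namespace CosetSpectralSystem

variable {I A X E : Type*} [Fintype I] [DecidableEq I] [Fintype A] [DecidableEq A]
    [Fintype X] [DecidableEq X] [Fintype E] (𝒮 : CosetSpectralSystem I A X E)

noncomputable def lam : ℂ := star 𝒮.G.C * (𝒮.H.C * 𝒮.Q.C)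

noncomputable def phi (e : E) : ℂ :=
  𝒮.G.ω (𝒮.k e) * (star (𝒮.H.ω (𝒮.δ e)) * star (𝒮.Q.ω (𝒮.ζ e)))

lemma lam_abs : ‖𝒮.lam‖ = 1 := by
  rw [lam, norm_mul, norm_mul, star_abs, 𝒮.G.C_abs, 𝒮.H.C_abs, 𝒮.Q.C_abs]
  norm_num

lemma phi_abs (e : E) : ‖𝒮.phi e‖ = 1 := by
  rw [phi, norm_mul, norm_mul, star_abs, star_abs, 𝒮.G.ω_abs, 𝒮.H.ω_abs, 𝒮.Q.ω_abs]
  norm_num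

lemma sum_p_one : ∑ e, (𝒮.p e : ℂ) = 1 := by
  have h := 𝒮.spec 𝒮.G.one 𝒮.H.one 𝒮.Q.one
  rw [𝒮.M_vac, 𝒮.G.bar_one] at h
  push_cast at h
  have h2 : ∀ e : E, (𝒮.G.S 𝒮.G.one (𝒮.k e) / 𝒮.G.S 𝒮.G.one (𝒮.k e)) *
      (𝒮.H.S 𝒮.H.one (𝒮.δ e) / 𝒮.H.S 𝒮.H.one (𝒮.δ e)) *
      (𝒮.Q.S 𝒮.Q.one (𝒮.ζ e) / 𝒮.Q.S 𝒮.Q.one (𝒮.ζ e)) * (𝒮.p e : ℂ) = (𝒮.p e : ℂ) := by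
    intro e
    rw [div_self (𝒮.G.S_one_ne (𝒮.k e)), div_self (𝒮.H.S_one_ne (𝒮.δ e)),
      div_self (𝒮.Q.S_one_ne (𝒮.ζ e))]
    ring
  rw [Finset.sum_congr rfl (fun e _ => h2 e)] at h
  exact h.symm

lemma phase_unit {j : I} {β : A} {y : X} (h : 𝒮.M j β y ≠ 0) :
    star (𝒮.G.ω j) * (𝒮.H.ω β * 𝒮.Q.ω y) = 1 := by
  rw [𝒮.phase j β y h]
  have h2 : 𝒮.H.ω β ≠ 0 := 𝒮.H.ω_ne β
  calc star (𝒮.G.ω j) * (𝒮.H.ω β * (𝒮.G.ω j * (𝒮.H.ω β)⁻¹))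
      = (star (𝒮.G.ω j) * 𝒮.G.ω j) * (𝒮.H.ω β * (𝒮.H.ω β)⁻¹) := by ring
    _ = 1 := by rw [star_mul_unit (𝒮.G.ω_abs j), mul_inv_cancel₀ h2, one_mul]

end CosetSpectralSystem


namespace CosetSpectralSystem

variable {I A X E : Type*} [Fintype I] [DecidableEq I] [Fintype A] [DecidableEq A]
    [Fintype X] [DecidableEq X] [Fintype E] (𝒮 : CosetSpectralSystem I A X E)

lemma key3 : ∑ e, 𝒮.phi e * (𝒮.p e : ℂ) = 𝒮.lam ^ 3 := by
  -- plain norm: stars on first rows removed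
  have h0 : ∑ j, ∑ β, ∑ y,
      𝒮.G.S 𝒮.G.one j * 𝒮.H.S 𝒮.H.one β * 𝒮.Q.S 𝒮.Q.one y * (𝒮.M j β y : ℂ) = 1 := by
    have h := 𝒮.norm_one
    simp only [𝒮.H.S_one_real, 𝒮.Q.S_one_real] at h
    exact h
  -- twisted norm
  have h1 : ∑ j, ∑ β, ∑ y,
      (star (𝒮.G.ω j) * 𝒮.G.S 𝒮.G.one j) * (𝒮.H.ω β * 𝒮.H.S 𝒮.H.one β) *
        (𝒮.Q.ω y * 𝒮.Q.S 𝒮.Q.one y) * (𝒮.M j β y : ℂ) = 1 := by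
    rw [← h0]
    refine Finset.sum_congr rfl fun j _ => Finset.sum_congr rfl fun β _ =>
      Finset.sum_congr rfl fun y _ => ?_
    by_cases hM : 𝒮.M j β y = 0
    · simp [hM]
    · have hu := 𝒮.phase_unit hM
      calc (star (𝒮.G.ω j) * 𝒮.G.S 𝒮.G.one j) * (𝒮.H.ω β * 𝒮.H.S 𝒮.H.one β) *
            (𝒮.Q.ω y * 𝒮.Q.S 𝒮.Q.one y) * (𝒮.M j β y : ℂ)
          = (star (𝒮.G.ω j) * (𝒮.H.ω β * 𝒮.Q.ω y)) *
              (𝒮.G.S 𝒮.G.one j * 𝒮.H.S 𝒮.H.one β * 𝒮.Q.S 𝒮.Q.one y * (𝒮.M j β y : ℂ)) := by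
            ring
        _ = 𝒮.G.S 𝒮.G.one j * 𝒮.H.S 𝒮.H.one β * 𝒮.Q.S 𝒮.Q.one y * (𝒮.M j β y : ℂ) := by
            rw [hu, one_mul]
  rw [𝒮.swap_spec (fun j => star (𝒮.G.ω j) * 𝒮.G.S 𝒮.G.one j)
      (fun β => 𝒮.H.ω β * 𝒮.H.S 𝒮.H.one β) (fun y => 𝒮.Q.ω y * 𝒮.Q.S 𝒮.Q.one y)] at h1
  -- evaluate brackets
  have hB : ∀ e : E, (𝒮.p e : ℂ) *
      (∑ j, (star (𝒮.G.ω j) * 𝒮.G.S 𝒮.G.one j) *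
        (𝒮.G.S (𝒮.G.bar j) (𝒮.k e) / 𝒮.G.S 𝒮.G.one (𝒮.k e))) *
      (∑ β, (𝒮.H.ω β * 𝒮.H.S 𝒮.H.one β) *
        (𝒮.H.S β (𝒮.δ e) / 𝒮.H.S 𝒮.H.one (𝒮.δ e))) *
      (∑ y, (𝒮.Q.ω y * 𝒮.Q.S 𝒮.Q.one y) *
        (𝒮.Q.S y (𝒮.ζ e) / 𝒮.Q.S 𝒮.Q.one (𝒮.ζ e)))
      = (star 𝒮.lam) ^ 3 * (𝒮.phi e * (𝒮.p e : ℂ)) := by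
    intro e
    have b1 : (∑ j, (star (𝒮.G.ω j) * 𝒮.G.S 𝒮.G.one j) *
        (𝒮.G.S (𝒮.G.bar j) (𝒮.k e) / 𝒮.G.S 𝒮.G.one (𝒮.k e)))
        = 𝒮.G.C ^ 3 * 𝒮.G.ω (𝒮.k e) := by
      have : (∑ j, (star (𝒮.G.ω j) * 𝒮.G.S 𝒮.G.one j) *
          (𝒮.G.S (𝒮.G.bar j) (𝒮.k e) / 𝒮.G.S 𝒮.G.one (𝒮.k e)))
          = (∑ j, (star (𝒮.G.ω j) * 𝒮.G.S 𝒮.G.one j) * 𝒮.G.S (𝒮.G.bar j) (𝒮.k e)) *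
            (𝒮.G.S 𝒮.G.one (𝒮.k e))⁻¹ := by
        rw [Finset.sum_mul]
        exact Finset.sum_congr rfl fun j _ => by rw [div_eq_mul_inv]; ring
      rw [this, 𝒮.G.BR1]
      calc 𝒮.G.C ^ 3 * (𝒮.G.ω (𝒮.k e) * 𝒮.G.S 𝒮.G.one (𝒮.k e)) * (𝒮.G.S 𝒮.G.one (𝒮.k e))⁻¹
          = 𝒮.G.C ^ 3 * 𝒮.G.ω (𝒮.k e) *
            (𝒮.G.S 𝒮.G.one (𝒮.k e) * (𝒮.G.S 𝒮.G.one (𝒮.k e))⁻¹) := by ring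
        _ = 𝒮.G.C ^ 3 * 𝒮.G.ω (𝒮.k e) := by
            rw [mul_inv_cancel₀ (𝒮.G.S_one_ne (𝒮.k e)), mul_one]
    have b2 : (∑ β, (𝒮.H.ω β * 𝒮.H.S 𝒮.H.one β) *
        (𝒮.H.S β (𝒮.δ e) / 𝒮.H.S 𝒮.H.one (𝒮.δ e)))
        = (star 𝒮.H.C) ^ 3 * star (𝒮.H.ω (𝒮.δ e)) := by
      have : (∑ β, (𝒮.H.ω β * 𝒮.H.S 𝒮.H.one β) *
          (𝒮.H.S β (𝒮.δ e) / 𝒮.H.S 𝒮.H.one (𝒮.δ e)))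
          = (∑ β, (𝒮.H.ω β * 𝒮.H.S 𝒮.H.one β) * 𝒮.H.S β (𝒮.δ e)) *
            (𝒮.H.S 𝒮.H.one (𝒮.δ e))⁻¹ := by
        rw [Finset.sum_mul]
        exact Finset.sum_congr rfl fun β _ => by rw [div_eq_mul_inv]; ring
      rw [this, 𝒮.H.BR2]
      calc (star 𝒮.H.C) ^ 3 * (star (𝒮.H.ω (𝒮.δ e)) * 𝒮.H.S 𝒮.H.one (𝒮.δ e)) *
            (𝒮.H.S 𝒮.H.one (𝒮.δ e))⁻¹
          = (star 𝒮.H.C) ^ 3 * star (𝒮.H.ω (𝒮.δ e)) *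
            (𝒮.H.S 𝒮.H.one (𝒮.δ e) * (𝒮.H.S 𝒮.H.one (𝒮.δ e))⁻¹) := by ring
        _ = (star 𝒮.H.C) ^ 3 * star (𝒮.H.ω (𝒮.δ e)) := by
            rw [mul_inv_cancel₀ (𝒮.H.S_one_ne (𝒮.δ e)), mul_one]
    have b3 : (∑ y, (𝒮.Q.ω y * 𝒮.Q.S 𝒮.Q.one y) *
        (𝒮.Q.S y (𝒮.ζ e) / 𝒮.Q.S 𝒮.Q.one (𝒮.ζ e)))
        = (star 𝒮.Q.C) ^ 3 * star (𝒮.Q.ω (𝒮.ζ e)) := by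
      have : (∑ y, (𝒮.Q.ω y * 𝒮.Q.S 𝒮.Q.one y) *
          (𝒮.Q.S y (𝒮.ζ e) / 𝒮.Q.S 𝒮.Q.one (𝒮.ζ e)))
          = (∑ y, (𝒮.Q.ω y * 𝒮.Q.S 𝒮.Q.one y) * 𝒮.Q.S y (𝒮.ζ e)) *
            (𝒮.Q.S 𝒮.Q.one (𝒮.ζ e))⁻¹ := by
        rw [Finset.sum_mul]
        exact Finset.sum_congr rfl fun y _ => by rw [div_eq_mul_inv]; ring
      rw [this, 𝒮.Q.BR2]
      calc (star 𝒮.Q.C) ^ 3 * (star (𝒮.Q.ω (𝒮.ζ e)) * 𝒮.Q.S 𝒮.Q.one (𝒮.ζ e)) *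
            (𝒮.Q.S 𝒮.Q.one (𝒮.ζ e))⁻¹
          = (star 𝒮.Q.C) ^ 3 * star (𝒮.Q.ω (𝒮.ζ e)) *
            (𝒮.Q.S 𝒮.Q.one (𝒮.ζ e) * (𝒮.Q.S 𝒮.Q.one (𝒮.ζ e))⁻¹) := by ring
        _ = (star 𝒮.Q.C) ^ 3 * star (𝒮.Q.ω (𝒮.ζ e)) := by
            rw [mul_inv_cancel₀ (𝒮.Q.S_one_ne (𝒮.ζ e)), mul_one]
    rw [b1, b2, b3, lam, phi]
    simp only [star_mul', star_star]
    ring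
  rw [Finset.sum_congr rfl (fun e _ => hB e)] at h1
  rw [← Finset.mul_sum] at h1
  -- h1 : (star lam)^3 * Σ phi p = 1
  have hls : 𝒮.lam * star 𝒮.lam = 1 := unit_mul_star 𝒮.lam_abs
  calc ∑ e, 𝒮.phi e * (𝒮.p e : ℂ)
      = ((𝒮.lam * star 𝒮.lam) ^ 3) * ∑ e, 𝒮.phi e * (𝒮.p e : ℂ) := by
        rw [hls, one_pow, one_mul]
    _ = 𝒮.lam ^ 3 * ((star 𝒮.lam) ^ 3 * ∑ e, 𝒮.phi e * (𝒮.p e : ℂ)) := by ring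
    _ = 𝒮.lam ^ 3 := by rw [h1, mul_one]

lemma lam_cube : 𝒮.lam ^ 3 = 1 := by
  have hnp := eq_one_of_unit_sum 𝒮.p (fun e => 𝒮.phi e * (star 𝒮.lam) ^ 3) 𝒮.p_nonneg
    (fun e => by
      rw [norm_mul, norm_pow, star_abs, 𝒮.lam_abs, 𝒮.phi_abs]; norm_num)
    𝒮.sum_p_one
    (by
      have : ∑ e, (𝒮.phi e * (star 𝒮.lam) ^ 3) * (𝒮.p e : ℂ)
          = (star 𝒮.lam) ^ 3 * ∑ e, 𝒮.phi e * (𝒮.p e : ℂ) := by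
        rw [Finset.mul_sum]
        exact Finset.sum_congr rfl fun e _ => by ring
      rw [this, 𝒮.key3]
      calc (star 𝒮.lam) ^ 3 * 𝒮.lam ^ 3 = (𝒮.lam * star 𝒮.lam) ^ 3 := by ring
        _ = 1 := by rw [unit_mul_star 𝒮.lam_abs, one_pow])
  obtain ⟨e₀, hk, hδ, hζ, hp⟩ := 𝒮.vac_node
  have hphi : 𝒮.phi e₀ = 1 := by
    rw [phi, hk, hδ, hζ, 𝒮.G.ω_one, 𝒮.H.ω_one, 𝒮.Q.ω_one]
    simp
  have := hnp e₀ (ne_of_gt hp)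
  simp only [hphi, one_mul] at this
  calc 𝒮.lam ^ 3 = star ((star 𝒮.lam) ^ 3) := by rw [star_pow, star_star]
    _ = 1 := by rw [this, star_one]

lemma node_phi_one (e : E) (hpe : 𝒮.p e ≠ 0) : 𝒮.phi e = 1 := by
  have hsl : (star 𝒮.lam) ^ 3 = 1 := by
    rw [← star_pow, 𝒮.lam_cube, star_one]
  have hnp := eq_one_of_unit_sum 𝒮.p 𝒮.phi 𝒮.p_nonneg 𝒮.phi_abs 𝒮.sum_p_one
    (by rw [𝒮.key3, 𝒮.lam_cube])
  exact hnp e hpe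

end CosetSpectralSystem


namespace CosetSpectralSystem

variable {I A X E : Type*} [Fintype I] [DecidableEq I] [Fintype A] [DecidableEq A]
    [Fintype X] [DecidableEq X] [Fintype E] (𝒮 : CosetSpectralSystem I A X E)

lemma psi_one {a : I} {d : A} {y : X} (h : 𝒮.M a d y ≠ 0) :
    𝒮.G.ω a * (star (𝒮.H.ω d) * star (𝒮.Q.ω y)) = 1 := by
  have hp := 𝒮.phase _ _ _ h
  rw [hp]
  have h2 : star (𝒮.H.ω d) ≠ 0 := star_ne_zero.mpr (𝒮.H.ω_ne d)
  simp only [star_mul', star_inv₀]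
  calc 𝒮.G.ω a * (star (𝒮.H.ω d) * (star (𝒮.G.ω a) * (star (𝒮.H.ω d))⁻¹))
      = (𝒮.G.ω a * star (𝒮.G.ω a)) * (star (𝒮.H.ω d) * (star (𝒮.H.ω d))⁻¹) := by ring
    _ = 1 := by rw [unit_mul_star (𝒮.G.ω_abs a), mul_inv_cancel₀ h2, one_mul]

lemma star_fiber (a : I) (d : A) (y : X) :
    (∑ e, if 𝒮.k e = 𝒮.G.bar a ∧ 𝒮.δ e = 𝒮.H.bar d ∧ 𝒮.ζ e = 𝒮.Q.bar y
        then (𝒮.p e : ℂ) else 0)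
      = 𝒮.G.S 𝒮.G.one a * 𝒮.H.S 𝒮.H.one d * 𝒮.Q.S 𝒮.Q.one y * (𝒮.M a d y : ℂ) := by
  -- the triple transform X
  have hXA : (∑ j, ∑ β, ∑ x,
      𝒮.G.S (𝒮.G.bar a) j * 𝒮.H.S d β * 𝒮.Q.S y x * (𝒮.M j β x : ℂ))
      = ∑ e, (if 𝒮.k e = 𝒮.G.bar a ∧ 𝒮.δ e = 𝒮.H.bar d ∧ 𝒮.ζ e = 𝒮.Q.bar y
          then (𝒮.p e : ℂ) * ((𝒮.G.S 𝒮.G.one a)⁻¹ * (𝒮.H.S 𝒮.H.one d)⁻¹ *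
            (𝒮.Q.S 𝒮.Q.one y)⁻¹)
          else 0) := by
    rw [𝒮.swap_spec (fun j => 𝒮.G.S (𝒮.G.bar a) j) (fun β => 𝒮.H.S d β)
      (fun x => 𝒮.Q.S y x)]
    refine Finset.sum_congr rfl fun e _ => ?_
    have b1 : (∑ j, 𝒮.G.S (𝒮.G.bar a) j *
        (𝒮.G.S (𝒮.G.bar j) (𝒮.k e) / 𝒮.G.S 𝒮.G.one (𝒮.k e)))
        = (if 𝒮.k e = 𝒮.G.bar a then 1 else 0) * (𝒮.G.S 𝒮.G.one (𝒮.k e))⁻¹ := by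
      rw [← 𝒮.G.IND1 a (𝒮.k e), Finset.sum_mul]
      exact Finset.sum_congr rfl fun j _ => by rw [div_eq_mul_inv]; ring
    have b2 : (∑ β, 𝒮.H.S d β * (𝒮.H.S β (𝒮.δ e) / 𝒮.H.S 𝒮.H.one (𝒮.δ e)))
        = (if 𝒮.δ e = 𝒮.H.bar d then 1 else 0) * (𝒮.H.S 𝒮.H.one (𝒮.δ e))⁻¹ := by
      rw [← 𝒮.H.sum_S_mul_S d (𝒮.δ e), Finset.sum_mul]
      exact Finset.sum_congr rfl fun β _ => by rw [div_eq_mul_inv]; ring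
    have b3 : (∑ x, 𝒮.Q.S y x * (𝒮.Q.S x (𝒮.ζ e) / 𝒮.Q.S 𝒮.Q.one (𝒮.ζ e)))
        = (if 𝒮.ζ e = 𝒮.Q.bar y then 1 else 0) * (𝒮.Q.S 𝒮.Q.one (𝒮.ζ e))⁻¹ := by
      rw [← 𝒮.Q.sum_S_mul_S y (𝒮.ζ e), Finset.sum_mul]
      exact Finset.sum_congr rfl fun x _ => by rw [div_eq_mul_inv]; ring
    rw [b1, b2, b3]
    by_cases h1 : 𝒮.k e = 𝒮.G.bar a
    · by_cases h2 : 𝒮.δ e = 𝒮.H.bar d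
      · by_cases h3 : 𝒮.ζ e = 𝒮.Q.bar y
        · simp only [h1, h2, h3, if_true, and_self, one_mul]
          rw [𝒮.G.S_one_bar, 𝒮.H.S_one_bar, 𝒮.Q.S_one_bar]
          ring
        · simp [h1, h2, h3]
      · simp [h1, h2]
    · simp [h1]
  have hXB : (∑ j, ∑ β, ∑ x,
      𝒮.G.S (𝒮.G.bar a) j * 𝒮.H.S d β * 𝒮.Q.S y x * (𝒮.M j β x : ℂ))
      = (𝒮.M a d y : ℂ) := by
    have hsl3 : (star 𝒮.lam) ^ 3 = 1 := by
      rw [← star_pow, 𝒮.lam_cube, star_one]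
    -- X2 = lam * X
    have hX2 : (∑ j, ∑ β, ∑ x,
        (star (𝒮.G.C * 𝒮.G.ω j) * 𝒮.G.S (𝒮.G.bar a) j) *
          ((𝒮.H.C * 𝒮.H.ω β) * 𝒮.H.S d β) *
          ((𝒮.Q.C * 𝒮.Q.ω x) * 𝒮.Q.S y x) * (𝒮.M j β x : ℂ))
        = 𝒮.lam * ∑ j, ∑ β, ∑ x,
            𝒮.G.S (𝒮.G.bar a) j * 𝒮.H.S d β * 𝒮.Q.S y x * (𝒮.M j β x : ℂ) := by
      rw [Finset.mul_sum]
      refine Finset.sum_congr rfl fun j _ => ?_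
      rw [Finset.mul_sum]
      refine Finset.sum_congr rfl fun β _ => ?_
      rw [Finset.mul_sum]
      refine Finset.sum_congr rfl fun x _ => ?_
      by_cases hM : 𝒮.M j β x = 0
      · simp [hM]
      · have hu := 𝒮.phase_unit hM
        simp only [star_mul']
        calc (star 𝒮.G.C * star (𝒮.G.ω j) * 𝒮.G.S (𝒮.G.bar a) j) *
              ((𝒮.H.C * 𝒮.H.ω β) * 𝒮.H.S d β) *
              ((𝒮.Q.C * 𝒮.Q.ω x) * 𝒮.Q.S y x) * (𝒮.M j β x : ℂ)
            = (star (𝒮.G.ω j) * (𝒮.H.ω β * 𝒮.Q.ω x)) *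
                ((star 𝒮.G.C * (𝒮.H.C * 𝒮.Q.C)) *
                  (𝒮.G.S (𝒮.G.bar a) j * 𝒮.H.S d β * 𝒮.Q.S y x * (𝒮.M j β x : ℂ))) := by
              ring
          _ = 𝒮.lam * (𝒮.G.S (𝒮.G.bar a) j * 𝒮.H.S d β * 𝒮.Q.S y x * (𝒮.M j β x : ℂ)) := by
              rw [hu, one_mul, lam]
    -- X2 via swap_spec
    have hX2' : (∑ j, ∑ β, ∑ x,
        (star (𝒮.G.C * 𝒮.G.ω j) * 𝒮.G.S (𝒮.G.bar a) j) *
          ((𝒮.H.C * 𝒮.H.ω β) * 𝒮.H.S d β) *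
          ((𝒮.Q.C * 𝒮.Q.ω x) * 𝒮.Q.S y x) * (𝒮.M j β x : ℂ))
        = (star 𝒮.lam) ^ 2 *
            ((𝒮.G.ω a * (star (𝒮.H.ω d) * star (𝒮.Q.ω y))) * (𝒮.M a d y : ℂ)) := by
      rw [𝒮.swap_spec (fun j => star (𝒮.G.C * 𝒮.G.ω j) * 𝒮.G.S (𝒮.G.bar a) j)
        (fun β => (𝒮.H.C * 𝒮.H.ω β) * 𝒮.H.S d β)
        (fun x => (𝒮.Q.C * 𝒮.Q.ω x) * 𝒮.Q.S y x)]
      have hspec := 𝒮.spec a d y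
      calc ∑ e, (𝒮.p e : ℂ) *
            (∑ j, (star (𝒮.G.C * 𝒮.G.ω j) * 𝒮.G.S (𝒮.G.bar a) j) *
              (𝒮.G.S (𝒮.G.bar j) (𝒮.k e) / 𝒮.G.S 𝒮.G.one (𝒮.k e))) *
            (∑ β, ((𝒮.H.C * 𝒮.H.ω β) * 𝒮.H.S d β) *
              (𝒮.H.S β (𝒮.δ e) / 𝒮.H.S 𝒮.H.one (𝒮.δ e))) *
            (∑ x, ((𝒮.Q.C * 𝒮.Q.ω x) * 𝒮.Q.S y x) *
              (𝒮.Q.S x (𝒮.ζ e) / 𝒮.Q.S 𝒮.Q.one (𝒮.ζ e)))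
          = ∑ e, ((star 𝒮.lam) ^ 2 *
              ((𝒮.G.ω a * (star (𝒮.H.ω d) * star (𝒮.Q.ω y))) *
                ((𝒮.G.S (𝒮.G.bar a) (𝒮.k e) / 𝒮.G.S 𝒮.G.one (𝒮.k e)) *
                 (𝒮.H.S d (𝒮.δ e) / 𝒮.H.S 𝒮.H.one (𝒮.δ e)) *
                 (𝒮.Q.S y (𝒮.ζ e) / 𝒮.Q.S 𝒮.Q.one (𝒮.ζ e)) * (𝒮.p e : ℂ)))) := by
            refine Finset.sum_congr rfl fun e _ => ?_
            have b1 : (∑ j, (star (𝒮.G.C * 𝒮.G.ω j) * 𝒮.G.S (𝒮.G.bar a) j) *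
                (𝒮.G.S (𝒮.G.bar j) (𝒮.k e) / 𝒮.G.S 𝒮.G.one (𝒮.k e)))
                = (𝒮.G.C ^ 2 * ((𝒮.G.ω a * 𝒮.G.ω (𝒮.k e)) * 𝒮.G.S (𝒮.G.bar a) (𝒮.k e))) *
                  (𝒮.G.S 𝒮.G.one (𝒮.k e))⁻¹ := by
              rw [← 𝒮.G.BR1' a (𝒮.k e), Finset.sum_mul]
              exact Finset.sum_congr rfl fun j _ => by rw [div_eq_mul_inv]; ring
            have b2 : (∑ β, ((𝒮.H.C * 𝒮.H.ω β) * 𝒮.H.S d β) *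
                (𝒮.H.S β (𝒮.δ e) / 𝒮.H.S 𝒮.H.one (𝒮.δ e)))
                = ((star 𝒮.H.C) ^ 2 * ((star (𝒮.H.ω d) * star (𝒮.H.ω (𝒮.δ e))) *
                    𝒮.H.S d (𝒮.δ e))) * (𝒮.H.S 𝒮.H.one (𝒮.δ e))⁻¹ := by
              rw [← 𝒮.H.BR2' d (𝒮.δ e), Finset.sum_mul]
              exact Finset.sum_congr rfl fun β _ => by rw [div_eq_mul_inv]; ring
            have b3 : (∑ x, ((𝒮.Q.C * 𝒮.Q.ω x) * 𝒮.Q.S y x) *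
                (𝒮.Q.S x (𝒮.ζ e) / 𝒮.Q.S 𝒮.Q.one (𝒮.ζ e)))
                = ((star 𝒮.Q.C) ^ 2 * ((star (𝒮.Q.ω y) * star (𝒮.Q.ω (𝒮.ζ e))) *
                    𝒮.Q.S y (𝒮.ζ e))) * (𝒮.Q.S 𝒮.Q.one (𝒮.ζ e))⁻¹ := by
              rw [← 𝒮.Q.BR2' y (𝒮.ζ e), Finset.sum_mul]
              exact Finset.sum_congr rfl fun x _ => by rw [div_eq_mul_inv]; ring
            rw [b1, b2, b3]
            by_cases hpe : 𝒮.p e = 0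
            · simp [hpe]
            · have hφ := 𝒮.node_phi_one e hpe
              rw [phi] at hφ
              calc (𝒮.p e : ℂ) *
                    ((𝒮.G.C ^ 2 * ((𝒮.G.ω a * 𝒮.G.ω (𝒮.k e)) * 𝒮.G.S (𝒮.G.bar a) (𝒮.k e))) *
                      (𝒮.G.S 𝒮.G.one (𝒮.k e))⁻¹) *
                    (((star 𝒮.H.C) ^ 2 * ((star (𝒮.H.ω d) * star (𝒮.H.ω (𝒮.δ e))) *
                      𝒮.H.S d (𝒮.δ e))) * (𝒮.H.S 𝒮.H.one (𝒮.δ e))⁻¹) *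
                    (((star 𝒮.Q.C) ^ 2 * ((star (𝒮.Q.ω y) * star (𝒮.Q.ω (𝒮.ζ e))) *
                      𝒮.Q.S y (𝒮.ζ e))) * (𝒮.Q.S 𝒮.Q.one (𝒮.ζ e))⁻¹)
                  = (𝒮.G.ω (𝒮.k e) * (star (𝒮.H.ω (𝒮.δ e)) * star (𝒮.Q.ω (𝒮.ζ e)))) *
                    ((𝒮.G.C * star 𝒮.H.C * star 𝒮.Q.C) ^ 2 *
                      ((𝒮.G.ω a * (star (𝒮.H.ω d) * star (𝒮.Q.ω y))) *
                        ((𝒮.G.S (𝒮.G.bar a) (𝒮.k e) * (𝒮.G.S 𝒮.G.one (𝒮.k e))⁻¹) *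
                         (𝒮.H.S d (𝒮.δ e) * (𝒮.H.S 𝒮.H.one (𝒮.δ e))⁻¹) *
                         (𝒮.Q.S y (𝒮.ζ e) * (𝒮.Q.S 𝒮.Q.one (𝒮.ζ e))⁻¹) * (𝒮.p e : ℂ)))) := by
                    ring
                _ = (star 𝒮.lam) ^ 2 *
                    ((𝒮.G.ω a * (star (𝒮.H.ω d) * star (𝒮.Q.ω y))) *
                      ((𝒮.G.S (𝒮.G.bar a) (𝒮.k e) / 𝒮.G.S 𝒮.G.one (𝒮.k e)) *
                       (𝒮.H.S d (𝒮.δ e) / 𝒮.H.S 𝒮.H.one (𝒮.δ e)) *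
                       (𝒮.Q.S y (𝒮.ζ e) / 𝒮.Q.S 𝒮.Q.one (𝒮.ζ e)) * (𝒮.p e : ℂ))) := by
                    rw [hφ, one_mul, lam]
                    simp only [star_mul', star_star, div_eq_mul_inv]
                    ring
        _ = (star 𝒮.lam) ^ 2 *
              ((𝒮.G.ω a * (star (𝒮.H.ω d) * star (𝒮.Q.ω y))) * (𝒮.M a d y : ℂ)) := by
            rw [← Finset.mul_sum, ← Finset.mul_sum, ← hspec]
    -- combine
    have hl : 𝒮.lam * (∑ j, ∑ β, ∑ x,
        𝒮.G.S (𝒮.G.bar a) j * 𝒮.H.S d β * 𝒮.Q.S y x * (𝒮.M j β x : ℂ))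
        = (star 𝒮.lam) ^ 2 *
            ((𝒮.G.ω a * (star (𝒮.H.ω d) * star (𝒮.Q.ω y))) * (𝒮.M a d y : ℂ)) := by
      rw [← hX2, hX2']
    have hpsi : (𝒮.G.ω a * (star (𝒮.H.ω d) * star (𝒮.Q.ω y))) * (𝒮.M a d y : ℂ)
        = (𝒮.M a d y : ℂ) := by
      by_cases hM : 𝒮.M a d y = 0
      · simp [hM]
      · rw [𝒮.psi_one hM, one_mul]
    calc (∑ j, ∑ β, ∑ x, 𝒮.G.S (𝒮.G.bar a) j * 𝒮.H.S d β * 𝒮.Q.S y x * (𝒮.M j β x : ℂ))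
        = (star 𝒮.lam * 𝒮.lam) *
            ∑ j, ∑ β, ∑ x, 𝒮.G.S (𝒮.G.bar a) j * 𝒮.H.S d β * 𝒮.Q.S y x * (𝒮.M j β x : ℂ) := by
          rw [star_mul_unit 𝒮.lam_abs, one_mul]
      _ = star 𝒮.lam * (𝒮.lam *
            ∑ j, ∑ β, ∑ x, 𝒮.G.S (𝒮.G.bar a) j * 𝒮.H.S d β * 𝒮.Q.S y x * (𝒮.M j β x : ℂ)) := by
          rw [mul_assoc]
      _ = star 𝒮.lam * ((star 𝒮.lam) ^ 2 *
            ((𝒮.G.ω a * (star (𝒮.H.ω d) * star (𝒮.Q.ω y))) * (𝒮.M a d y : ℂ))) := by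
          rw [hl]
      _ = (star 𝒮.lam) ^ 3 *
            ((𝒮.G.ω a * (star (𝒮.H.ω d) * star (𝒮.Q.ω y))) * (𝒮.M a d y : ℂ)) := by
          ring
      _ = (𝒮.M a d y : ℂ) := by rw [hsl3, one_mul, hpsi]
  -- combine A and B
  have hfib := hXA.symm.trans hXB
  calc (∑ e, if 𝒮.k e = 𝒮.G.bar a ∧ 𝒮.δ e = 𝒮.H.bar d ∧ 𝒮.ζ e = 𝒮.Q.bar y
          then (𝒮.p e : ℂ) else 0)
      = (𝒮.G.S 𝒮.G.one a * 𝒮.H.S 𝒮.H.one d * 𝒮.Q.S 𝒮.Q.one y) *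
          ∑ e, (if 𝒮.k e = 𝒮.G.bar a ∧ 𝒮.δ e = 𝒮.H.bar d ∧ 𝒮.ζ e = 𝒮.Q.bar y
            then (𝒮.p e : ℂ) * ((𝒮.G.S 𝒮.G.one a)⁻¹ * (𝒮.H.S 𝒮.H.one d)⁻¹ *
              (𝒮.Q.S 𝒮.Q.one y)⁻¹)
            else 0) := by
        rw [Finset.mul_sum]
        refine Finset.sum_congr rfl fun e _ => ?_
        by_cases hc : 𝒮.k e = 𝒮.G.bar a ∧ 𝒮.δ e = 𝒮.H.bar d ∧ 𝒮.ζ e = 𝒮.Q.bar y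
        · simp only [hc, and_self, if_true]
          have n1 := 𝒮.G.S_one_ne a
          have n2 := 𝒮.H.S_one_ne d
          have n3 := 𝒮.Q.S_one_ne y
          field_simp
        · simp [hc]
    _ = 𝒮.G.S 𝒮.G.one a * 𝒮.H.S 𝒮.H.one d * 𝒮.Q.S 𝒮.Q.one y * (𝒮.M a d y : ℂ) := by
        rw [hfib]

end CosetSpectralSystem


private lemma sum_swap3 {α β ε M : Type*} [AddCommMonoid M]
    [Fintype α] [Fintype β] [Fintype ε] (f : α → β → ε → M) :
    ∑ a, ∑ b, ∑ e, f a b e = ∑ e, ∑ a, ∑ b, f a b e := by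
  calc ∑ a, ∑ b, ∑ e, f a b e
      = ∑ a, ∑ e, ∑ b, f a b e := Finset.sum_congr rfl fun a _ => Finset.sum_comm
    _ = ∑ e, ∑ a, ∑ b, f a b e := Finset.sum_comm

private lemma sum_ite2 {I A M : Type*} [Fintype I] [Fintype A] [DecidableEq I]
    [DecidableEq A] [AddCommMonoid M] (a₀ : I) (d₀ : A) (f : I → A → M) :
    ∑ a, ∑ d, (if a₀ = a ∧ d₀ = d then f a d else 0) = f a₀ d₀ := by
  have h1 : ∀ a : I, (∑ d, if a₀ = a ∧ d₀ = d then f a d else 0)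
      = if a₀ = a then f a d₀ else 0 := by
    intro a
    by_cases h : a₀ = a
    · simp only [h, true_and, if_true]
      rw [Finset.sum_ite_eq Finset.univ d₀ (f a)]
      simp
    · simp [h]
  rw [Finset.sum_congr rfl (fun a _ => h1 a),
    Finset.sum_ite_eq Finset.univ a₀ (fun a => f a d₀)]
  simp

/-- Proposition 3.1 (2):
`Σ_x M(i,α,x) S̈_{xz} = Σ_{j,β} S_{ij} conj(Ṡ_{αβ}) M(j,β,z)`. -/
theorem cosetSpectralSystem_prop31_two {I A X E : Type*}
    [Fintype I] [DecidableEq I] [Fintype A] [DecidableEq A]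
    [Fintype X] [DecidableEq X] [Fintype E]
    (𝒮 : CosetSpectralSystem I A X E) (i : I) (α : A) (z : X) :
    ∑ x, (𝒮.M i α x : ℂ) * 𝒮.Q.S x z
      = ∑ j, ∑ β, 𝒮.G.S i j * star (𝒮.H.S α β) * (𝒮.M j β z : ℂ) := by
  classical
  -- Step 1: expand via the spectral decomposition and collapse the x-sum
  have h1 : ∑ x, (𝒮.M i α x : ℂ) * 𝒮.Q.S x z
      = ∑ e, ((𝒮.G.S (𝒮.G.bar i) (𝒮.k e) / 𝒮.G.S 𝒮.G.one (𝒮.k e)) *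
              (𝒮.H.S α (𝒮.δ e) / 𝒮.H.S 𝒮.H.one (𝒮.δ e)) *
              ((if 𝒮.ζ e = 𝒮.Q.bar z then 1 else 0) * (𝒮.Q.S 𝒮.Q.one (𝒮.ζ e))⁻¹) *
              (𝒮.p e : ℂ)) := by
    simp only [𝒮.spec, Finset.sum_mul]
    rw [Finset.sum_comm]
    refine Finset.sum_congr rfl fun e _ => ?_
    have hx : ∀ x : X, (𝒮.G.S (𝒮.G.bar i) (𝒮.k e) / 𝒮.G.S 𝒮.G.one (𝒮.k e)) *
        (𝒮.H.S α (𝒮.δ e) / 𝒮.H.S 𝒮.H.one (𝒮.δ e)) *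
        (𝒮.Q.S x (𝒮.ζ e) / 𝒮.Q.S 𝒮.Q.one (𝒮.ζ e)) * (𝒮.p e : ℂ) * 𝒮.Q.S x z
        = ((𝒮.G.S (𝒮.G.bar i) (𝒮.k e) / 𝒮.G.S 𝒮.G.one (𝒮.k e)) *
           (𝒮.H.S α (𝒮.δ e) / 𝒮.H.S 𝒮.H.one (𝒮.δ e)) *
           (𝒮.Q.S 𝒮.Q.one (𝒮.ζ e))⁻¹ * (𝒮.p e : ℂ)) * (𝒮.Q.S (𝒮.ζ e) x * 𝒮.Q.S x z) := by
      intro x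
      rw [𝒮.Q.S_symm (𝒮.ζ e) x, div_eq_mul_inv (𝒮.Q.S x (𝒮.ζ e))]
      ring
    rw [Finset.sum_congr rfl (fun x _ => hx x), ← Finset.mul_sum, 𝒮.Q.sum_S_mul_S]
    have hiff : (z = 𝒮.Q.bar (𝒮.ζ e)) ↔ (𝒮.ζ e = 𝒮.Q.bar z) := by
      constructor
      · intro h; rw [h]; exact (𝒮.Q.bar_invol (𝒮.ζ e)).symm
      · intro h; rw [h]; exact (𝒮.Q.bar_invol z).symm
    rw [if_congr hiff rfl rfl]
    ring
  -- Step 2: fiberize the e-sum over (k, d)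
  have h2 : ∑ a, ∑ d, ((𝒮.G.S (𝒮.G.bar i) a / 𝒮.G.S 𝒮.G.one a) *
        (𝒮.H.S α d / 𝒮.H.S 𝒮.H.one d) * (𝒮.Q.S 𝒮.Q.one z)⁻¹) *
        (∑ e, if 𝒮.k e = a ∧ 𝒮.δ e = d ∧ 𝒮.ζ e = 𝒮.Q.bar z then (𝒮.p e : ℂ) else 0)
      = ∑ e, ((𝒮.G.S (𝒮.G.bar i) (𝒮.k e) / 𝒮.G.S 𝒮.G.one (𝒮.k e)) *
              (𝒮.H.S α (𝒮.δ e) / 𝒮.H.S 𝒮.H.one (𝒮.δ e)) *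
              ((if 𝒮.ζ e = 𝒮.Q.bar z then 1 else 0) * (𝒮.Q.S 𝒮.Q.one (𝒮.ζ e))⁻¹) *
              (𝒮.p e : ℂ)) := by
    simp only [Finset.mul_sum]
    rw [sum_swap3 (fun a d e => ((𝒮.G.S (𝒮.G.bar i) a / 𝒮.G.S 𝒮.G.one a) *
        (𝒮.H.S α d / 𝒮.H.S 𝒮.H.one d) * (𝒮.Q.S 𝒮.Q.one z)⁻¹) *
        (if 𝒮.k e = a ∧ 𝒮.δ e = d ∧ 𝒮.ζ e = 𝒮.Q.bar z then (𝒮.p e : ℂ) else 0))]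
    refine Finset.sum_congr rfl fun e _ => ?_
    by_cases h3 : 𝒮.ζ e = 𝒮.Q.bar z
    · simp only [h3, and_true, eq_self_iff_true, if_true, mul_ite, mul_zero]
      rw [sum_ite2 (𝒮.k e) (𝒮.δ e) (fun a d => ((𝒮.G.S (𝒮.G.bar i) a / 𝒮.G.S 𝒮.G.one a) *
        (𝒮.H.S α d / 𝒮.H.S 𝒮.H.one d) * (𝒮.Q.S 𝒮.Q.one z)⁻¹) * (𝒮.p e : ℂ))]
      rw [𝒮.Q.S_one_bar z]
      ring
    · simp [h3]
  -- Step 3: evaluate the fibers via star_fiber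
  have h3 : ∀ (a : I) (d : A),
      (∑ e, if 𝒮.k e = a ∧ 𝒮.δ e = d ∧ 𝒮.ζ e = 𝒮.Q.bar z then (𝒮.p e : ℂ) else 0)
      = 𝒮.G.S 𝒮.G.one a * 𝒮.H.S 𝒮.H.one d * 𝒮.Q.S 𝒮.Q.one z *
          (𝒮.M (𝒮.G.bar a) (𝒮.H.bar d) z : ℂ) := by
    intro a d
    have h := 𝒮.star_fiber (𝒮.G.bar a) (𝒮.H.bar d) z
    rw [𝒮.G.S_one_bar, 𝒮.H.S_one_bar] at h
    simp only [𝒮.G.bar_invol a, 𝒮.H.bar_invol d] at h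
    exact h
  -- Step 4: combine and cancel
  have h4 : ∑ a, ∑ d, ((𝒮.G.S (𝒮.G.bar i) a / 𝒮.G.S 𝒮.G.one a) *
        (𝒮.H.S α d / 𝒮.H.S 𝒮.H.one d) * (𝒮.Q.S 𝒮.Q.one z)⁻¹) *
        (∑ e, if 𝒮.k e = a ∧ 𝒮.δ e = d ∧ 𝒮.ζ e = 𝒮.Q.bar z then (𝒮.p e : ℂ) else 0)
      = ∑ a, ∑ d, 𝒮.G.S (𝒮.G.bar i) a * 𝒮.H.S α d *
          (𝒮.M (𝒮.G.bar a) (𝒮.H.bar d) z : ℂ) := by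
    refine Finset.sum_congr rfl fun a _ => Finset.sum_congr rfl fun d _ => ?_
    rw [h3 a d]
    have n1 := 𝒮.G.S_one_ne a
    have n2 := 𝒮.H.S_one_ne d
    have n3 := 𝒮.Q.S_one_ne z
    field_simp
  -- Step 5: reindex by bar and convert to stars
  have h5 : ∑ a, ∑ d, 𝒮.G.S (𝒮.G.bar i) a * 𝒮.H.S α d *
        (𝒮.M (𝒮.G.bar a) (𝒮.H.bar d) z : ℂ)
      = ∑ j, ∑ β, 𝒮.G.S i j * star (𝒮.H.S α β) * (𝒮.M j β z : ℂ) := by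
    rw [← 𝒮.G.sum_reindex_bar (fun a => ∑ d, 𝒮.G.S (𝒮.G.bar i) a * 𝒮.H.S α d *
      (𝒮.M (𝒮.G.bar a) (𝒮.H.bar d) z : ℂ))]
    refine Finset.sum_congr rfl fun a _ => ?_
    rw [← 𝒮.H.sum_reindex_bar (fun d => 𝒮.G.S (𝒮.G.bar i) (𝒮.G.bar a) * 𝒮.H.S α d *
      (𝒮.M (𝒮.G.bar (𝒮.G.bar a)) (𝒮.H.bar d) z : ℂ))]
    refine Finset.sum_congr rfl fun d _ => ?_
    rw [𝒮.G.S_bar_bar i a, 𝒮.G.bar_invol a, 𝒮.H.bar_invol d, ← 𝒮.H.conj_S' α d]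
  rw [h1, ← h2, h4, h5]
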